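/- Let (p_n)_{n≥1} be a sequence of distinct real numbers with no finite accumulation point, let (r_n)_{n≥1} be positive integers, and let a_{n,k} ∈ ℂ for 1 ≤ k ≤ r_n. Assume that for every ε > 0 the double series Σ_{n=1}^∞ Σ_{k=1}^{r_n} |a_{n,k}|·ε^{−k} converges. Then the series P(s) = Σ_{n=1}^∞ Σ_{k=1}^{r_n} a_{n,k}·(s−ip_n)^{−k} converges uniformly on every compact subset of ℂ not containing any of the points ip_n, and P defines a holomorphic function on ℂ \ {ip_n : n ≥ 1}. -/

import Mathlib

open MeasureTheory Filter

section aux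
open Metric

lemma key_sep (p : ℕ → ℝ)
    (hacc : ∀ C : ℝ, 0 < C → {n : ℕ | |p n| ≤ C}.Finite)
    (K : Set ℂ) (hK : IsCompact K) (hdisj : ∀ n, Complex.I * p n ∉ K) :
    ∃ ε > 0, ∀ s ∈ K, ∀ n, ε ≤ dist s (Complex.I * p n) := by
  obtain ⟨R, hR⟩ := hK.isBounded.subset_closedBall 0
  have hRnorm : ∀ s ∈ K, ‖s‖ ≤ |R| := by
    intro s hs
    have := hR hs
    simp only [mem_closedBall, dist_zero_right] at this
    exact this.trans (le_abs_self R)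
  have hCpos : (0:ℝ) < |R| + 1 := by positivity
  set T : Set ℂ := (fun n => Complex.I * p n) '' {n : ℕ | |p n| ≤ |R| + 1} with hT
  have hTfin : T.Finite := (hacc _ hCpos).image _
  have hnormIp : ∀ n : ℕ, ‖(Complex.I * p n : ℂ)‖ = |p n| := by
    intro n
    simp [Complex.norm_real, abs_of_nonneg]
  have hfar : ∀ s ∈ K, ∀ n : ℕ, |R| + 1 < |p n| → (1:ℝ) ≤ dist s (Complex.I * p n) := by
    intro s hs n hn
    have h1 : ‖(Complex.I * p n : ℂ)‖ - ‖s‖ ≤ dist s (Complex.I * p n) := by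
      rw [dist_comm, dist_eq_norm]
      exact norm_sub_norm_le _ _
    have := hRnorm s hs
    rw [hnormIp] at h1
    linarith
  rcases Set.eq_empty_or_nonempty T with hTe | hTne
  · refine ⟨1, one_pos, fun s hs n => ?_⟩
    apply hfar s hs n
    by_contra h
    push_neg at h
    exact (Set.eq_empty_iff_forall_notMem.mp hTe (Complex.I * p n)) ⟨n, h, rfl⟩
  rcases K.eq_empty_or_nonempty with hKe | hKne
  · exact ⟨1, one_pos, by simp [hKe]⟩
  have hTc : IsClosed T := hTfin.isClosed
  have hg : Continuous fun s : ℂ => min 1 (infDist s T) :=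
    continuous_const.min (continuous_infDist_pt T)
  obtain ⟨s₀, hs₀K, hs₀min⟩ := hK.exists_isMinOn hKne hg.continuousOn
  have hpos : ∀ s ∈ K, 0 < min 1 (infDist s T) := by
    intro s hs
    refine lt_min one_pos ?_
    rw [← hTc.notMem_iff_infDist_pos hTne]
    rintro ⟨n, -, rfl⟩
    exact hdisj n hs
  refine ⟨min 1 (infDist s₀ T), hpos s₀ hs₀K, fun s hs n => ?_⟩
  rcases le_or_gt (|p n|) (|R| + 1) with hn | hn
  · have hmem : (Complex.I * p n : ℂ) ∈ T := ⟨n, hn, rfl⟩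
    calc min 1 (infDist s₀ T) ≤ min 1 (infDist s T) := hs₀min hs
    _ ≤ infDist s T := min_le_right _ _
    _ ≤ dist s (Complex.I * p n) := infDist_le_dist_of_mem hmem
  · exact le_trans (min_le_left _ _) (hfar s hs n hn)

lemma unif_on (p : ℕ → ℝ)
    (hacc : ∀ C : ℝ, 0 < C → {n : ℕ | |p n| ≤ C}.Finite)
    (r : ℕ → ℕ) (c : ℕ → ℕ → ℂ)
    (hsum : ∀ ε : ℝ, 0 < ε → Summable (fun n : ℕ =>
      ∑ k ∈ Finset.Icc 1 (r n), ‖c n k‖ * ε ^ (-(k : ℤ))))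
    (K : Set ℂ) (hK : IsCompact K) (hdisj : ∀ n, Complex.I * p n ∉ K) :
    TendstoUniformlyOn
        (fun (N : ℕ) (s : ℂ) => ∑ n ∈ Finset.range N, ∑ k ∈ Finset.Icc 1 (r n),
          c n k * (s - Complex.I * p n) ^ (-(k : ℤ)))
        (fun s : ℂ => ∑' n : ℕ, ∑ k ∈ Finset.Icc 1 (r n),
          c n k * (s - Complex.I * p n) ^ (-(k : ℤ)))
        Filter.atTop K := by
  obtain ⟨ε, hε, hεK⟩ := key_sep p hacc K hK hdisj
  refine tendstoUniformlyOn_tsum_nat (hsum ε hε) ?_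
  intro n s hs
  refine (norm_sum_le _ _).trans (Finset.sum_le_sum fun k hk => ?_)
  rw [norm_mul, norm_zpow]
  refine mul_le_mul_of_nonneg_left ?_ (norm_nonneg _)
  have hds : ε ≤ ‖s - Complex.I * p n‖ := by
    rw [← dist_eq_norm]; exact hεK s hs n
  rw [zpow_neg, zpow_neg, zpow_natCast, zpow_natCast]
  exact inv_anti₀ (pow_pos hε k) (pow_le_pow_left₀ hε.le hds k)

lemma diff_part (p : ℕ → ℝ)
    (hacc : ∀ C : ℝ, 0 < C → {n : ℕ | |p n| ≤ C}.Finite)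
    (r : ℕ → ℕ) (c : ℕ → ℕ → ℂ)
    (hsum : ∀ ε : ℝ, 0 < ε → Summable (fun n : ℕ =>
      ∑ k ∈ Finset.Icc 1 (r n), ‖c n k‖ * ε ^ (-(k : ℤ)))) :
    DifferentiableOn ℂ
      (fun s : ℂ => ∑' n : ℕ, ∑ k ∈ Finset.Icc 1 (r n),
        c n k * (s - Complex.I * p n) ^ (-(k : ℤ)))
      {s : ℂ | ∀ n, s ≠ Complex.I * p n} := by
  set U : Set ℂ := {s : ℂ | ∀ n, s ≠ Complex.I * p n} with hU
  have hUopen : IsOpen U := by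
    rw [isOpen_iff_mem_nhds]
    intro s₀ hs₀
    have hdisj : ∀ n, Complex.I * (p n : ℂ) ∉ ({s₀} : Set ℂ) := by
      intro n hn
      exact hs₀ n (Set.mem_singleton_iff.mp hn).symm
    obtain ⟨ε, hε, hεK⟩ := key_sep p hacc {s₀} isCompact_singleton hdisj
    rw [Metric.mem_nhds_iff]
    refine ⟨ε, hε, fun s hs n hsn => ?_⟩
    have h1 := hεK s₀ rfl n
    rw [Metric.mem_ball] at hs
    have h2 : dist s₀ (Complex.I * p n) = dist s₀ s := by rw [hsn]
    rw [h2, dist_comm] at h1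
    linarith
  have hlocal : TendstoLocallyUniformlyOn
      (fun (N : ℕ) (s : ℂ) => ∑ n ∈ Finset.range N, ∑ k ∈ Finset.Icc 1 (r n),
        c n k * (s - Complex.I * p n) ^ (-(k : ℤ)))
      (fun s : ℂ => ∑' n : ℕ, ∑ k ∈ Finset.Icc 1 (r n),
        c n k * (s - Complex.I * p n) ^ (-(k : ℤ))) Filter.atTop U := by
    rw [tendstoLocallyUniformlyOn_iff_forall_isCompact hUopen]
    intro K hKU hK
    exact unif_on p hacc r c hsum K hK (fun n hn => (hKU hn) n rfl)
  refine hlocal.differentiableOn ?_ hUopen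
  filter_upwards with N
  apply DifferentiableOn.fun_sum
  intro n _
  apply DifferentiableOn.fun_sum
  intro k _
  intro s hs
  refine (DifferentiableAt.const_mul ?_ _).differentiableWithinAt
  exact ((differentiableAt_id.sub_const _).zpow (Or.inl (sub_ne_zero.mpr (hs n))))

end aux

theorem statement4 (p : ℕ → ℝ) (hp : Function.Injective p)
    (hacc : ∀ C : ℝ, 0 < C → {n : ℕ | |p n| ≤ C}.Finite)
    (r : ℕ → ℕ) (hrpos : ∀ n, 0 < r n) (c : ℕ → ℕ → ℂ)
    (hsum : ∀ ε : ℝ, 0 < ε → Summable (fun n : ℕ =>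
      ∑ k ∈ Finset.Icc 1 (r n), ‖c n k‖ * ε ^ (-(k : ℤ)))) :
    (∀ K : Set ℂ, IsCompact K → (∀ n, Complex.I * p n ∉ K) →
      TendstoUniformlyOn
        (fun (N : ℕ) (s : ℂ) => ∑ n ∈ Finset.range N, ∑ k ∈ Finset.Icc 1 (r n),
          c n k * (s - Complex.I * p n) ^ (-(k : ℤ)))
        (fun s : ℂ => ∑' n : ℕ, ∑ k ∈ Finset.Icc 1 (r n),
          c n k * (s - Complex.I * p n) ^ (-(k : ℤ)))
        Filter.atTop K) ∧
    DifferentiableOn ℂ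
      (fun s : ℂ => ∑' n : ℕ, ∑ k ∈ Finset.Icc 1 (r n),
        c n k * (s - Complex.I * p n) ^ (-(k : ℤ)))
      {s : ℂ | ∀ n, s ≠ Complex.I * p n} := by
  exact ⟨fun K hK hd => unif_on p hacc r c hsum K hK hd, diff_part p hacc r c hsum⟩
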